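/- Under the compatibility condition of the previous context and assuming the concentrations evolve via the Kolmogorov forward equations of an irreducible Markov chain with stationary concentrations c_{j,e}, the Gibbs free energy density g(t) = Σ_j c_j(t)·μ_j(t) is non-increasing in time, and g(t) ≥ μ·c with equality if and only if c_j = c_{j,e} for all j. -/

import Mathlib

lemma key_le {a b : ℝ} (ha : 0 < a) (hb : 0 < b) :
    a * (Real.log b - Real.log a) ≤ b - a := by
  have h := Real.log_le_sub_one_of_pos (div_pos hb ha)
  rw [Real.log_div hb.ne' ha.ne'] at h
  have h1 := mul_le_mul_of_nonneg_left h ha.le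
  have h2 : a * (b / a - 1) = b - a := by field_simp
  linarith

lemma key_lt {a b : ℝ} (ha : 0 < a) (hb : 0 < b) (hab : a ≠ b) :
    a * (Real.log b - Real.log a) < b - a := by
  have hba : b / a ≠ 1 := by
    intro hh
    rw [div_eq_one_iff_eq ha.ne'] at hh
    exact hab hh.symm
  have h := Real.log_lt_sub_one_of_pos (div_pos hb ha) hba
  rw [Real.log_div hb.ne' ha.ne'] at h
  have h1 := mul_lt_mul_of_pos_left h ha
  have h2 : a * (b / a - 1) = b - a := by field_simp
  linarith

lemma S_nonpos {J : ℕ} (u : Fin J → Fin J → ℝ) (ce cc : Fin J → ℝ)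
    (hu : ∀ j k, j ≠ k → 0 ≤ u j k) (hce : ∀ j, 0 < ce j) (hcc : ∀ j, 0 < cc j)
    (hstat : ∀ j, ∑ k, (u k j * ce k - u j k * ce j) = 0) :
    ∑ j, (∑ k, (u k j * cc k - u j k * cc j)) * (Real.log (cc j) - Real.log (ce j)) ≤ 0 := by
  set L : Fin J → ℝ := fun j => Real.log (cc j) - Real.log (ce j) with hL
  have step1 : (∑ j, (∑ k, (u k j * cc k - u j k * cc j)) * L j)
      = ∑ j, ∑ k, u k j * cc k * (L j - L k) := by
    have h1 : ∑ j, ∑ k, u j k * cc j * L j = ∑ j, ∑ k, u k j * cc k * L k :=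
      Finset.sum_comm
    calc ∑ j, (∑ k, (u k j * cc k - u j k * cc j)) * L j
        = ∑ j, ∑ k, (u k j * cc k * L j - u j k * cc j * L j) := by
          simp only [Finset.sum_mul, sub_mul]
      _ = (∑ j, ∑ k, u k j * cc k * L j) - ∑ j, ∑ k, u j k * cc j * L j := by
          simp only [Finset.sum_sub_distrib]
      _ = (∑ j, ∑ k, u k j * cc k * L j) - ∑ j, ∑ k, u k j * cc k * L k := by rw [h1]
      _ = ∑ j, ∑ k, u k j * cc k * (L j - L k) := by
          simp only [mul_sub, Finset.sum_sub_distrib]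
  have step2 : (∑ j, ∑ k, u k j * cc k * (L j - L k))
      ≤ ∑ j, ∑ k, u k j * ce k * (cc j / ce j - cc k / ce k) := by
    apply Finset.sum_le_sum
    intro j _
    apply Finset.sum_le_sum
    intro k _
    by_cases hjk : j = k
    · subst hjk; simp
    · have huk : 0 ≤ u k j := hu k j (Ne.symm hjk)
      have key := key_le (div_pos (hcc k) (hce k)) (div_pos (hcc j) (hce j))
      rw [Real.log_div (hcc j).ne' (hce j).ne', Real.log_div (hcc k).ne' (hce k).ne'] at key
      have h2 : cc k * (L j - L k)
          = ce k * (cc k / ce k * ((Real.log (cc j) - Real.log (ce j))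
              - (Real.log (cc k) - Real.log (ce k)))) := by
        have hck : ce k * (cc k / ce k) = cc k := by
          rw [mul_comm, div_mul_eq_mul_div, mul_div_assoc, div_self (hce k).ne', mul_one]
        rw [hL, ← mul_assoc, hck]
      calc u k j * cc k * (L j - L k) = u k j * (cc k * (L j - L k)) := by ring
        _ ≤ u k j * (ce k * (cc j / ce j - cc k / ce k)) := by
            apply mul_le_mul_of_nonneg_left _ huk
            rw [h2]
            exact mul_le_mul_of_nonneg_left key (hce k).le
        _ = u k j * ce k * (cc j / ce j - cc k / ce k) := by ring
  have step3 : (∑ j, ∑ k, u k j * ce k * (cc j / ce j - cc k / ce k)) = 0 := by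
    have h1 : ∑ j, ∑ k, u j k * ce j * (cc j / ce j)
        = ∑ j, ∑ k, u k j * ce k * (cc k / ce k) := Finset.sum_comm
    have h2 : (∑ j, ∑ k, u k j * ce k * (cc j / ce j - cc k / ce k))
        = (∑ j, ∑ k, u k j * ce k * (cc j / ce j))
          - ∑ j, ∑ k, u j k * ce j * (cc j / ce j) := by
      rw [h1]; simp only [mul_sub, Finset.sum_sub_distrib]
    rw [h2]
    have h3 : (∑ j, ∑ k, u k j * ce k * (cc j / ce j))
        - (∑ j, ∑ k, u j k * ce j * (cc j / ce j))
        = ∑ j, (∑ k, (u k j * ce k - u j k * ce j)) * (cc j / ce j) := by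
      simp only [Finset.sum_mul, sub_mul, Finset.sum_sub_distrib]
    rw [h3]
    apply Finset.sum_eq_zero
    intro j _
    rw [hstat j, zero_mul]
  linarith

/-- Under the compatibility condition, along the Kolmogorov forward equations
of an irreducible Markov chain with stationary concentrations `c_{j,e}`, the
Gibbs free energy density `g(t) = Σ_j c_j μ_j` is non-increasing, bounded below
by `μ c`, with equality iff `c_j = c_{j,e}` for all `j`. -/
theorem stmt5 (J : ℕ) (hJ : 0 < J) (β μ c : ℝ) (hβ : 0 < β)
    (u : Fin J → Fin J → ℝ) (μ0 K : Fin J → ℝ)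
    (ce : Fin J → ℝ) (cj : ℝ → Fin J → ℝ)
    (hu : ∀ j k, j ≠ k → 0 ≤ u j k)
    (hirr : ∀ j k, j ≠ k → Relation.TransGen (fun a b => a ≠ b ∧ 0 < u a b) j k)
    (hce : ∀ j, 0 < ce j) (hcesum : ∑ j, ce j = c)
    (hstat : ∀ j, ∑ k, (u k j * ce k - u j k * ce j) = 0)
    (hcj : ∀ t j, 0 < cj t j) (hsum : ∀ t, ∑ j, cj t j = c)
    (hode : ∀ t j, HasDerivAt (fun s => cj s j)
      (∑ k, (u k j * cj t k - u j k * cj t j)) t)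
    (hcompat : ∀ j, μ0 j + K j + β⁻¹ * Real.log (ce j) = μ) :
    (∀ s t : ℝ, s ≤ t →
      ∑ j, cj t j * (μ0 j + β⁻¹ * Real.log (cj t j) + K j) ≤
        ∑ j, cj s j * (μ0 j + β⁻¹ * Real.log (cj s j) + K j)) ∧
    ∀ t, μ * c ≤ ∑ j, cj t j * (μ0 j + β⁻¹ * Real.log (cj t j) + K j) ∧
      ((∑ j, cj t j * (μ0 j + β⁻¹ * Real.log (cj t j) + K j)) = μ * c ↔
        ∀ j, cj t j = ce j) := by
  have hβinv : 0 < β⁻¹ := inv_pos.mpr hβ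
  have hμK : ∀ j, μ0 j + K j = μ - β⁻¹ * Real.log (ce j) := by
    intro j; have := hcompat j; linarith
  set g : ℝ → ℝ := fun s => ∑ j, cj s j * (μ0 j + β⁻¹ * Real.log (cj s j) + K j)
    with hg_def
  set d : ℝ → Fin J → ℝ := fun t j => ∑ k, (u k j * cj t k - u j k * cj t j) with hd_def
  -- key rewriting of each summand
  have hterm_eq : ∀ t j, μ0 j + β⁻¹ * Real.log (cj t j) + K j
      = μ + β⁻¹ * (Real.log (cj t j) - Real.log (ce j)) := by
    intro t j
    have h := hμK j
    rw [mul_sub]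
    linarith
  -- representation of g
  have hrep : ∀ t, g t = μ * c
      + β⁻¹ * ∑ j, cj t j * (Real.log (cj t j) - Real.log (ce j)) := by
    intro t
    have : ∀ j : Fin J, cj t j * (μ0 j + β⁻¹ * Real.log (cj t j) + K j)
        = μ * cj t j + β⁻¹ * (cj t j * (Real.log (cj t j) - Real.log (ce j))) := by
      intro j; rw [hterm_eq t j]; ring
    rw [hg_def]
    simp only []
    rw [Finset.sum_congr rfl (fun j _ => this j), Finset.sum_add_distrib,
      ← Finset.mul_sum, ← Finset.mul_sum, hsum t]
  -- derivative of g
  have hgd : ∀ t, HasDerivAt g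
      (∑ j, (d t j * (μ0 j + β⁻¹ * Real.log (cj t j) + K j)
        + cj t j * (β⁻¹ * (d t j / cj t j)))) t := by
    intro t
    apply HasDerivAt.fun_sum
    intro j _
    exact (hode t j).mul
      (((((hode t j).log (hcj t j).ne').const_mul β⁻¹).const_add (μ0 j)).add_const (K j))
  -- the derivative is nonpositive
  have hG_nonpos : ∀ t, (∑ j, (d t j * (μ0 j + β⁻¹ * Real.log (cj t j) + K j)
      + cj t j * (β⁻¹ * (d t j / cj t j)))) ≤ 0 := by
    intro t
    have hterm : ∀ j : Fin J, d t j * (μ0 j + β⁻¹ * Real.log (cj t j) + K j)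
        + cj t j * (β⁻¹ * (d t j / cj t j))
        = (μ + β⁻¹) * d t j
          + β⁻¹ * (d t j * (Real.log (cj t j) - Real.log (ce j))) := by
      intro j
      have h3 : cj t j * (β⁻¹ * (d t j / cj t j)) = β⁻¹ * d t j := by
        rw [mul_comm (cj t j), mul_assoc, div_mul_cancel₀ _ (hcj t j).ne']
      rw [h3, hterm_eq t j]; ring
    rw [Finset.sum_congr rfl (fun j _ => hterm j), Finset.sum_add_distrib,
      ← Finset.mul_sum, ← Finset.mul_sum]
    have hd0 : ∑ j, d t j = 0 := by
      rw [hd_def]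
      simp only [Finset.sum_sub_distrib]
      rw [Finset.sum_comm]
      exact sub_self _
    rw [hd0, mul_zero, zero_add]
    have hS := S_nonpos u ce (cj t) hu hce (hcj t) hstat
    rw [hd_def]
    exact mul_nonpos_of_nonneg_of_nonpos hβinv.le hS
  -- antitonicity of g
  have hant : Antitone g := by
    apply antitone_of_deriv_nonpos
    · exact fun t => (hgd t).differentiableAt
    · intro t
      rw [(hgd t).deriv]
      exact hG_nonpos t
  constructor
  · intro s t hst
    exact hant hst
  · intro t
    -- pointwise lower bound and equality case
    have hterm_ge : ∀ j : Fin J, cj t j - ce j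
        ≤ cj t j * (Real.log (cj t j) - Real.log (ce j)) := by
      intro j
      have h := key_le (hcj t j) (hce j)
      have h2 : cj t j * (Real.log (cj t j) - Real.log (ce j))
          = -(cj t j * (Real.log (ce j) - Real.log (cj t j))) := by ring
      linarith
    have hdiffsum : ∑ j, (cj t j - ce j) = 0 := by
      rw [Finset.sum_sub_distrib, hsum t, hcesum, sub_self]
    have hSge0 : 0 ≤ ∑ j, cj t j * (Real.log (cj t j) - Real.log (ce j)) := by
      calc (0:ℝ) = ∑ j, (cj t j - ce j) := hdiffsum.symm
        _ ≤ ∑ j, cj t j * (Real.log (cj t j) - Real.log (ce j)) :=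
            Finset.sum_le_sum fun j _ => hterm_ge j
    have hrept := hrep t
    constructor
    · have : g t = ∑ j, cj t j * (μ0 j + β⁻¹ * Real.log (cj t j) + K j) := rfl
      rw [← this, hrept]
      nlinarith
    · constructor
      · intro heq
        have hg0 : β⁻¹ * ∑ j, cj t j * (Real.log (cj t j) - Real.log (ce j)) = 0 := by
          have : g t = ∑ j, cj t j * (μ0 j + β⁻¹ * Real.log (cj t j) + K j) := rfl
          rw [← this, hrept] at heq
          linarith
        have hS0 : ∑ j, cj t j * (Real.log (cj t j) - Real.log (ce j)) = 0 := by
          rcases mul_eq_zero.mp hg0 with h | h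
          · exact absurd h hβinv.ne'
          · exact h
        -- each term of the shifted sum vanishes
        have hE0 : ∑ j, (cj t j * (Real.log (cj t j) - Real.log (ce j))
            - (cj t j - ce j)) = 0 := by
          rw [Finset.sum_sub_distrib, hS0, hdiffsum, sub_self]
        have heach := (Finset.sum_eq_zero_iff_of_nonneg
          (fun j (_ : j ∈ Finset.univ) => by
            have := hterm_ge j; linarith)).mp hE0
        intro j
        by_contra hne
        have hlt := key_lt (hcj t j) (hce j) hne
        have h2 : cj t j * (Real.log (cj t j) - Real.log (ce j))
            = -(cj t j * (Real.log (ce j) - Real.log (cj t j))) := by ring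
        have := heach j (Finset.mem_univ j)
        nlinarith
      · intro hall
        have : ∀ j : Fin J, cj t j * (Real.log (cj t j) - Real.log (ce j)) = 0 := by
          intro j; rw [hall j, sub_self, mul_zero]
        have hS0 : ∑ j, cj t j * (Real.log (cj t j) - Real.log (ce j)) = 0 :=
          Finset.sum_eq_zero fun j _ => this j
        have : g t = ∑ j, cj t j * (μ0 j + β⁻¹ * Real.log (cj t j) + K j) := rfl
        rw [← this, hrept, hS0, mul_zero, add_zero]
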